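/- Let R be an algebraic curvature tensor on ℝ⁴ whose components with respect to the standard orthonormal basis satisfy the Chern basis conditions R_{1213} = R_{1214} = R_{1223} = R_{1224} = R_{1314} = R_{1323} = 0. Then ∑_{a,b,c} R_{abc1}² = 2( R_{1212}² + R_{1313}² + R_{1414}² + R_{1234}² + R_{1324}² + R_{1423}² + ρ_{12}² + ρ_{13}² + ρ_{14}² ), where ρ is the Ricci tensor of R. -/
import Mathlib


/-- Ricci tensor of an algebraic curvature tensor, `ρ i j = ∑ a, R a i j a`
(sign convention so that ρ is the usual Ricci contraction). -/
def Ric {n : ℕ} (R : Fin n → Fin n → Fin n → Fin n → ℝ) (i j : Fin n) : ℝ :=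
  ∑ a, R a i j a

/-- Scalar curvature `τ = ∑ i, ρ i i`. -/
def scalCurv {n : ℕ} (R : Fin n → Fin n → Fin n → Fin n → ℝ) : ℝ :=
  ∑ i, Ric R i i

/-- Squared norm of the curvature tensor, `|R|² = ∑ R_{ijkl}²`. -/
def normR2 {n : ℕ} (R : Fin n → Fin n → Fin n → Fin n → ℝ) : ℝ :=
  ∑ i, ∑ j, ∑ k, ∑ l, (R i j k l) ^ 2

/-- Squared norm of the Ricci tensor, `|ρ|² = ∑ ρ_{ij}²`. -/
def normRic2 {n : ℕ} (R : Fin n → Fin n → Fin n → Fin n → ℝ) : ℝ :=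
  ∑ i, ∑ j, (Ric R i j) ^ 2

/-- `R` is an algebraic curvature tensor: antisymmetry in the first and last pairs,
pair-interchange symmetry, and the first Bianchi identity. -/
def IsACT {n : ℕ} (R : Fin n → Fin n → Fin n → Fin n → ℝ) : Prop :=
  (∀ i j k l, R i j k l = - R j i k l) ∧
  (∀ i j k l, R i j k l = - R i j l k) ∧
  (∀ i j k l, R i j k l = R k l i j) ∧
  (∀ i j k l, R i j k l + R j k i l + R k i j l = 0)

/-- Kronecker delta. -/
def kron {n : ℕ} (i j : Fin n) : ℝ := if i = j then 1 else 0

set_option maxHeartbeats 2000000 in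
theorem chern_basis_Rabc1_sq (R : Fin 4 → Fin 4 → Fin 4 → Fin 4 → ℝ) (hR : IsACT R)
    (hC1 : R 0 1 0 2 = 0) (hC2 : R 0 1 0 3 = 0) (hC3 : R 0 1 1 2 = 0)
    (hC4 : R 0 1 1 3 = 0) (hC5 : R 0 2 0 3 = 0) (hC6 : R 0 2 1 2 = 0) :
    (∑ a, ∑ b, ∑ c, (R a b c 0) ^ 2) =
      2 * ((R 0 1 0 1) ^ 2 + (R 0 2 0 2) ^ 2 + (R 0 3 0 3) ^ 2 + (R 0 1 2 3) ^ 2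
        + (R 0 2 1 3) ^ 2 + (R 0 3 1 2) ^ 2
        + (Ric R 0 1) ^ 2 + (Ric R 0 2) ^ 2 + (Ric R 0 3) ^ 2) := by
  obtain ⟨h1, h2, h3, h4⟩ := hR
  have e1 : R 0 0 0 0 = 0 := by linarith [h1 0 0 0 0]
  have e2 : R 0 0 1 0 = 0 := by linarith [h1 0 0 1 0]
  have e3 : R 0 0 2 0 = 0 := by linarith [h1 0 0 2 0]
  have e4 : R 0 0 3 0 = 0 := by linarith [h1 0 0 3 0]
  have e5 : R 0 1 0 0 = 0 := by linarith [h2 0 1 0 0]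
  have e6 : R 0 1 1 0 = -R 0 1 0 1 := by linarith [h2 0 1 1 0]
  have e7 : R 0 1 2 0 = -R 0 1 0 2 := by linarith [h2 0 1 2 0]
  have e8 : R 0 1 3 0 = -R 0 1 0 3 := by linarith [h2 0 1 3 0]
  have e9 : R 0 2 0 0 = 0 := by linarith [h2 0 2 0 0]
  have e10 : R 0 2 1 0 = -R 0 1 0 2 := by linarith [h2 0 2 1 0, h3 0 2 0 1]
  have e11 : R 0 2 2 0 = -R 0 2 0 2 := by linarith [h2 0 2 2 0]
  have e12 : R 0 2 3 0 = -R 0 2 0 3 := by linarith [h2 0 2 3 0]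
  have e13 : R 0 3 0 0 = 0 := by linarith [h2 0 3 0 0]
  have e14 : R 0 3 1 0 = -R 0 1 0 3 := by linarith [h2 0 3 1 0, h3 0 3 0 1]
  have e15 : R 0 3 2 0 = -R 0 2 0 3 := by linarith [h2 0 3 2 0, h3 0 3 0 2]
  have e16 : R 0 3 3 0 = -R 0 3 0 3 := by linarith [h2 0 3 3 0]
  have e17 : R 1 0 0 0 = 0 := by linarith [h2 1 0 0 0]
  have e18 : R 1 0 1 0 = R 0 1 0 1 := by linarith [h1 1 0 1 0, h2 0 1 1 0]
  have e19 : R 1 0 1 1 = 0 := by linarith [h2 1 0 1 1]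
  have e20 : R 1 0 2 0 = R 0 1 0 2 := by linarith [h1 1 0 2 0, h2 0 1 2 0]
  have e21 : R 1 0 2 1 = R 0 1 1 2 := by linarith [h1 1 0 2 1, h2 0 1 2 1]
  have e22 : R 1 0 3 0 = R 0 1 0 3 := by linarith [h1 1 0 3 0, h2 0 1 3 0]
  have e23 : R 1 0 3 1 = R 0 1 1 3 := by linarith [h1 1 0 3 1, h2 0 1 3 1]
  have e24 : R 1 1 0 0 = 0 := by linarith [h1 1 1 0 0]
  have e25 : R 1 1 1 0 = 0 := by linarith [h1 1 1 1 0]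
  have e26 : R 1 1 2 0 = 0 := by linarith [h1 1 1 2 0]
  have e27 : R 1 1 3 0 = 0 := by linarith [h1 1 1 3 0]
  have e28 : R 1 2 0 0 = 0 := by linarith [h2 1 2 0 0]
  have e29 : R 1 2 1 0 = -R 0 1 1 2 := by linarith [h2 1 2 1 0, h3 1 2 0 1]
  have e30 : R 1 2 2 0 = -R 0 2 1 2 := by linarith [h2 1 2 2 0, h3 1 2 0 2]
  have e31 : R 1 2 3 0 = -R 0 3 1 2 := by linarith [h2 1 2 3 0, h3 1 2 0 3]
  have e32 : R 1 3 0 0 = 0 := by linarith [h2 1 3 0 0]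
  have e33 : R 1 3 1 0 = -R 0 1 1 3 := by linarith [h2 1 3 1 0, h3 1 3 0 1]
  have e34 : R 1 3 2 0 = -R 0 2 1 3 := by linarith [h2 1 3 2 0, h3 1 3 0 2]
  have e35 : R 1 3 3 0 = -R 0 3 1 3 := by linarith [h2 1 3 3 0, h3 1 3 0 3]
  have e36 : R 2 0 0 0 = 0 := by linarith [h2 2 0 0 0]
  have e37 : R 2 0 1 0 = R 0 1 0 2 := by linarith [h1 2 0 1 0, h2 0 2 1 0, h3 0 2 0 1]
  have e38 : R 2 0 1 2 = -R 0 2 1 2 := by linarith [h1 2 0 1 2]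
  have e39 : R 2 0 2 0 = R 0 2 0 2 := by linarith [h1 2 0 2 0, h2 0 2 2 0]
  have e40 : R 2 0 2 2 = 0 := by linarith [h2 2 0 2 2]
  have e41 : R 2 0 3 0 = R 0 2 0 3 := by linarith [h1 2 0 3 0, h2 0 2 3 0]
  have e42 : R 2 0 3 2 = R 0 2 2 3 := by linarith [h1 2 0 3 2, h2 0 2 3 2]
  have e43 : R 2 1 0 0 = 0 := by linarith [h2 2 1 0 0]
  have e44 : R 2 1 1 0 = R 0 1 1 2 := by linarith [h1 2 1 1 0, h2 1 2 1 0, h3 1 2 0 1]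
  have e45 : R 2 1 2 0 = R 0 2 1 2 := by linarith [h1 2 1 2 0, h2 1 2 2 0, h3 1 2 0 2]
  have e46 : R 2 1 3 0 = R 0 3 1 2 := by linarith [h1 2 1 3 0, h2 1 2 3 0, h3 1 2 0 3]
  have e47 : R 2 2 0 0 = 0 := by linarith [h1 2 2 0 0]
  have e48 : R 2 2 1 0 = 0 := by linarith [h1 2 2 1 0]
  have e49 : R 2 2 2 0 = 0 := by linarith [h1 2 2 2 0]
  have e50 : R 2 2 3 0 = 0 := by linarith [h1 2 2 3 0]
  have e51 : R 2 3 0 0 = 0 := by linarith [h2 2 3 0 0]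
  have e52 : R 2 3 1 0 = -R 0 1 2 3 := by linarith [h2 2 3 1 0, h3 2 3 0 1]
  have e53 : R 2 3 2 0 = -R 0 2 2 3 := by linarith [h2 2 3 2 0, h3 2 3 0 2]
  have e54 : R 2 3 3 0 = -R 0 3 2 3 := by linarith [h2 2 3 3 0, h3 2 3 0 3]
  have e55 : R 3 0 0 0 = 0 := by linarith [h2 3 0 0 0]
  have e56 : R 3 0 1 0 = R 0 1 0 3 := by linarith [h1 3 0 1 0, h2 0 3 1 0, h3 0 3 0 1]
  have e57 : R 3 0 1 3 = -R 0 3 1 3 := by linarith [h1 3 0 1 3]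
  have e58 : R 3 0 2 0 = R 0 2 0 3 := by linarith [h1 3 0 2 0, h2 0 3 2 0, h3 0 3 0 2]
  have e59 : R 3 0 2 3 = -R 0 3 2 3 := by linarith [h1 3 0 2 3]
  have e60 : R 3 0 3 0 = R 0 3 0 3 := by linarith [h1 3 0 3 0, h2 0 3 3 0]
  have e61 : R 3 0 3 3 = 0 := by linarith [h2 3 0 3 3]
  have e62 : R 3 1 0 0 = 0 := by linarith [h2 3 1 0 0]
  have e63 : R 3 1 1 0 = R 0 1 1 3 := by linarith [h1 3 1 1 0, h2 1 3 1 0, h3 1 3 0 1]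
  have e64 : R 3 1 2 0 = R 0 2 1 3 := by linarith [h1 3 1 2 0, h2 1 3 2 0, h3 1 3 0 2]
  have e65 : R 3 1 3 0 = R 0 3 1 3 := by linarith [h1 3 1 3 0, h2 1 3 3 0, h3 1 3 0 3]
  have e66 : R 3 2 0 0 = 0 := by linarith [h2 3 2 0 0]
  have e67 : R 3 2 1 0 = R 0 1 2 3 := by linarith [h1 3 2 1 0, h2 2 3 1 0, h3 2 3 0 1]
  have e68 : R 3 2 2 0 = R 0 2 2 3 := by linarith [h1 3 2 2 0, h2 2 3 2 0, h3 2 3 0 2]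
  have e69 : R 3 2 3 0 = R 0 3 2 3 := by linarith [h1 3 2 3 0, h2 2 3 3 0, h3 2 3 0 3]
  have e70 : R 3 3 0 0 = 0 := by linarith [h1 3 3 0 0]
  have e71 : R 3 3 1 0 = 0 := by linarith [h1 3 3 1 0]
  have e72 : R 3 3 2 0 = 0 := by linarith [h1 3 3 2 0]
  have e73 : R 3 3 3 0 = 0 := by linarith [h1 3 3 3 0]
  simp only [Ric, Fin.sum_univ_four]
  simp only [e1, e2, e3, e4, e5, e6, e7, e8, e9, e10, e11, e12, e13, e14, e15, e16, e17, e18, e19, e20, e21, e22, e23, e24, e25, e26, e27, e28, e29, e30, e31, e32, e33, e34, e35, e36, e37, e38, e39, e40, e41, e42, e43, e44, e45, e46, e47, e48, e49, e50, e51, e52, e53, e54, e55, e56, e57, e58, e59, e60, e61, e62, e63, e64, e65, e66, e67, e68, e69, e70, e71, e72, e73, hC1, hC2, hC3, hC4, hC5, hC6]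
  ring
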